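/- (Additive decomposition of traces under congruence) Let $X_\ell = f_\ell^{1/2} W_\ell f_\ell^{1/2}$ for HPD matrices $f_\ell, W_\ell$, $\ell = 1,\dots,2^J$. Then for the midpoint pyramids built from $(X_\ell)$, $(f_\ell)$, $(W_\ell)$ respectively, at every scale-location $(j,k)$: $\mathrm{Tr}(\mathrm{Log}(M^X_{j,k})) = \mathrm{Tr}(\mathrm{Log}(M^f_{j,k})) + \mathrm{Tr}(\mathrm{Log}(M^W_{j,k}))$. -/

import Mathlib

set_option maxHeartbeats 800000

open Matrix
open scoped ComplexOrder Classical

variable {d : ℕ}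

/-- Frobenius norm of a complex matrix. -/
noncomputable def frob (A : Matrix (Fin d) (Fin d) ℂ) : ℝ :=
  Real.sqrt (∑ i, ∑ j, ‖A i j‖ ^ 2)

/-- The unique positive semidefinite square root (junk value `0` if not PSD). -/

noncomputable def msqrt (A : Matrix (Fin d) (Fin d) ℂ) : Matrix (Fin d) (Fin d) ℂ :=
  if h : A.PosSemidef then
    (h.1.eigenvectorUnitary : Matrix (Fin d) (Fin d) ℂ) *
      Matrix.diagonal (fun i => ((Real.sqrt (h.1.eigenvalues i) : ℝ) : ℂ)) *
      star (h.1.eigenvectorUnitary : Matrix (Fin d) (Fin d) ℂ)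
  else 0

/-- Principal matrix logarithm of a Hermitian (positive definite) matrix, via the
spectral decomposition (junk value `0` otherwise). -/

noncomputable def mLog (A : Matrix (Fin d) (Fin d) ℂ) : Matrix (Fin d) (Fin d) ℂ :=
  if h : A.IsHermitian then
    (h.eigenvectorUnitary : Matrix (Fin d) (Fin d) ℂ) *
      Matrix.diagonal (fun i => (Real.log (h.eigenvalues i) : ℂ)) *
      star (h.eigenvectorUnitary : Matrix (Fin d) (Fin d) ℂ)
  else 0

/-- Matrix exponential. -/
noncomputable def mExp (A : Matrix (Fin d) (Fin d) ℂ) : Matrix (Fin d) (Fin d) ℂ :=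
  NormedSpace.exp A

/-- Real power of an HPD matrix: `X^t = Exp(t Log X)`. -/
noncomputable def mpow (A : Matrix (Fin d) (Fin d) ℂ) (t : ℝ) : Matrix (Fin d) (Fin d) ℂ :=
  mExp ((t : ℂ) • mLog A)

/-- Affine-invariant Riemannian distance on HPD matrices. -/
noncomputable def rdist (p q : Matrix (Fin d) (Fin d) ℂ) : ℝ :=
  frob (mLog ((msqrt p)⁻¹ * q * (msqrt p)⁻¹))

/-- Geodesic midpoint of two HPD matrices. -/
noncomputable def mid (p q : Matrix (Fin d) (Fin d) ℂ) : Matrix (Fin d) (Fin d) ℂ :=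
  msqrt p * msqrt ((msqrt p)⁻¹ * q * (msqrt p)⁻¹) * msqrt p

/-- Riemannian exponential map at `p`. -/
noncomputable def rExp (p h : Matrix (Fin d) (Fin d) ℂ) : Matrix (Fin d) (Fin d) ℂ :=
  msqrt p * mExp ((msqrt p)⁻¹ * h * (msqrt p)⁻¹) * msqrt p

/-- Riemannian logarithm map at `p`. -/
noncomputable def rLog (p q : Matrix (Fin d) (Fin d) ℂ) : Matrix (Fin d) (Fin d) ℂ :=
  msqrt p * mLog ((msqrt p)⁻¹ * q * (msqrt p)⁻¹) * msqrt p

/-- The midpoint pyramid: `pyramid X m k` is the repeated geodesic midpoint of the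
`2^m` data points `X (2^m k), …, X (2^m k + 2^m - 1)` (i.e. the scale `J - m` midpoint
`M_{J-m,k}` built from data at the finest scale `J`). -/
noncomputable def pyramid {d : ℕ} (X : ℕ → Matrix (Fin d) (Fin d) ℂ) :
    ℕ → ℕ → Matrix (Fin d) (Fin d) ℂ
  | 0, k => X k
  | m + 1, k => mid (pyramid X m (2 * k)) (pyramid X m (2 * k + 1))

section Aux
open Matrix
variable {d : ℕ}

lemma posDef_conj_of_isHermitian {B A : Matrix (Fin d) (Fin d) ℂ} (hA : A.PosDef)
    (hB : B.IsHermitian) (hBu : IsUnit B) : (B * A * B).PosDef := by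
  refine posDef_iff_dotProduct_mulVec.mpr ⟨?_, fun x hx => ?_⟩
  · have := Matrix.isHermitian_mul_mul_conjTranspose B hA.1
    rwa [hB.eq] at this
  · have hkey : star x ⬝ᵥ (B * A * B) *ᵥ x = star (B *ᵥ x) ⬝ᵥ A *ᵥ (B *ᵥ x) := by
      simp only [star_mulVec, hB.eq, Matrix.dotProduct_mulVec, Matrix.vecMul_vecMul,
        Matrix.mul_assoc]
    rw [hkey]
    have hBx : B *ᵥ x ≠ 0 := by
      have hinj : Function.Injective B.mulVec :=
        (Matrix.mulVec_injective_iff_isUnit).mpr hBu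
      intro h0
      exact hx (hinj (by simpa using h0))
    exact hA.dotProduct_mulVec_pos hBx

lemma posDef_of_posSemidef_det_ne_zero {S : Matrix (Fin d) (Fin d) ℂ}
    (hS : S.PosSemidef) (hdet : S.det ≠ 0) : S.PosDef := by
  rw [hS.1.posDef_iff_eigenvalues_pos]
  intro i
  refine lt_of_le_of_ne (hS.eigenvalues_nonneg i) (Ne.symm ?_)
  intro h0
  apply hdet
  rw [hS.1.det_eq_prod_eigenvalues, Finset.prod_eq_zero (Finset.mem_univ i) (by simp [h0])]

lemma msqrt_eq {A : Matrix (Fin d) (Fin d) ℂ} (hA : A.PosDef) :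
    msqrt A = (hA.1.eigenvectorUnitary : Matrix (Fin d) (Fin d) ℂ) *
      Matrix.diagonal (fun i => ((Real.sqrt (hA.1.eigenvalues i) : ℝ) : ℂ)) *
      star (hA.1.eigenvectorUnitary : Matrix (Fin d) (Fin d) ℂ) := dif_pos hA.posSemidef

lemma msqrt_mul_self {A : Matrix (Fin d) (Fin d) ℂ} (hA : A.PosDef) :
    msqrt A * msqrt A = A := by
  rw [msqrt_eq hA]
  have hU : star (hA.1.eigenvectorUnitary : Matrix (Fin d) (Fin d) ℂ) *
      (hA.1.eigenvectorUnitary : Matrix (Fin d) (Fin d) ℂ) = 1 := Unitary.coe_star_mul_self _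
  have key : ∀ X Y : Matrix (Fin d) (Fin d) ℂ,
      (hA.1.eigenvectorUnitary : Matrix (Fin d) (Fin d) ℂ) * X *
        star (hA.1.eigenvectorUnitary : Matrix (Fin d) (Fin d) ℂ) *
      ((hA.1.eigenvectorUnitary : Matrix (Fin d) (Fin d) ℂ) * Y *
        star (hA.1.eigenvectorUnitary : Matrix (Fin d) (Fin d) ℂ)) =
      (hA.1.eigenvectorUnitary : Matrix (Fin d) (Fin d) ℂ) * (X * Y) *
        star (hA.1.eigenvectorUnitary : Matrix (Fin d) (Fin d) ℂ) := by
    intro X Y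
    simp only [mul_assoc]
    rw [← mul_assoc (star _) (hA.1.eigenvectorUnitary : Matrix (Fin d) (Fin d) ℂ), hU, one_mul]
  rw [key, Matrix.diagonal_mul_diagonal]
  conv_rhs => rw [hA.1.spectral_theorem, Unitary.conjStarAlgAut_apply]
  refine congrArg (· * _) (congrArg (_ * ·) (congrArg diagonal ?_))
  funext i
  rw [← Complex.ofReal_mul, Real.mul_self_sqrt (hA.eigenvalues_pos i).le]
  rfl

lemma msqrt_det_ne_zero {A : Matrix (Fin d) (Fin d) ℂ} (hA : A.PosDef) :
    (msqrt A).det ≠ 0 := by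
  intro h
  have := congrArg Matrix.det (msqrt_mul_self hA)
  rw [Matrix.det_mul, h, mul_zero] at this
  exact hA.det_pos.ne' this.symm

lemma msqrt_posDef {A : Matrix (Fin d) (Fin d) ℂ} (hA : A.PosDef) :
    (msqrt A).PosDef := by
  rw [msqrt_eq hA]
  rw [Matrix.IsUnit.posDef_star_right_conjugate_iff
    (Unitary.isUnit_coe (U := hA.1.eigenvectorUnitary)), Matrix.posDef_diagonal_iff]
  intro i
  exact Complex.zero_lt_real.mpr (Real.sqrt_pos.mpr (hA.eigenvalues_pos i))

lemma mid_posDef {p q : Matrix (Fin d) (Fin d) ℂ} (hp : p.PosDef) (hq : q.PosDef) :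
    (mid p q).PosDef := by
  have hsp := msqrt_posDef hp
  have hspi := hsp.inv
  have hS : ((msqrt p)⁻¹ * q * (msqrt p)⁻¹).PosDef :=
    posDef_conj_of_isHermitian hq hspi.1 hspi.isUnit
  exact posDef_conj_of_isHermitian (msqrt_posDef hS) hsp.1 hsp.isUnit

lemma posDef_det_re_pos {A : Matrix (Fin d) (Fin d) ℂ} (hA : A.PosDef) :
    0 < A.det.re := by
  have := hA.det_pos
  rw [Complex.lt_def] at this
  simpa using this.1

lemma posDef_det_eq_ofReal {A : Matrix (Fin d) (Fin d) ℂ} (hA : A.PosDef) :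
    A.det = (A.det.re : ℂ) := by
  have := hA.det_pos
  rw [Complex.lt_def] at this
  apply Complex.ext <;> simp [this.2.symm]

lemma det_mid_sq {p q : Matrix (Fin d) (Fin d) ℂ} (hp : p.PosDef) (hq : q.PosDef) :
    (mid p q).det ^ 2 = p.det * q.det := by
  have hsp := msqrt_posDef hp
  have hspi := hsp.inv
  have hS : ((msqrt p)⁻¹ * q * (msqrt p)⁻¹).PosDef :=
    posDef_conj_of_isHermitian hq hspi.1 hspi.isUnit
  have hsqS : (msqrt ((msqrt p)⁻¹ * q * (msqrt p)⁻¹)).det ^ 2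
      = ((msqrt p)⁻¹ * q * (msqrt p)⁻¹).det := by
    have := congrArg Matrix.det (msqrt_mul_self hS)
    rw [Matrix.det_mul] at this
    rw [sq]; exact this
  have hsqp : (msqrt p).det ^ 2 = p.det := by
    have := congrArg Matrix.det (msqrt_mul_self hp)
    rw [Matrix.det_mul] at this
    rw [sq]; exact this
  have hmid : (mid p q).det
      = (msqrt p).det * (msqrt ((msqrt p)⁻¹ * q * (msqrt p)⁻¹)).det * (msqrt p).det := by
    simp [mid, Matrix.det_mul]
  have hSdet : ((msqrt p)⁻¹ * q * (msqrt p)⁻¹).det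
      = ((msqrt p).det)⁻¹ * q.det * ((msqrt p).det)⁻¹ := by
    rw [Matrix.det_mul, Matrix.det_mul, Matrix.det_nonsing_inv, Ring.inverse_eq_inv]
  have hne : (msqrt p).det ≠ 0 := msqrt_det_ne_zero hp
  rw [hmid, mul_pow, mul_pow, hsqS, hSdet, ← hsqp]
  field_simp

lemma trace_mLog_posDef {A : Matrix (Fin d) (Fin d) ℂ} (hA : A.PosDef) :
    (mLog A).trace = (Real.log A.det.re : ℂ) := by
  have hH := hA.1
  rw [mLog, dif_pos hH]
  rw [Matrix.trace_mul_cycle, Unitary.coe_star_mul_self, one_mul, Matrix.trace_diagonal]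
  have hdet : A.det.re = ∏ i, hH.eigenvalues i := by
    have h1 : A.det = ((∏ i, hH.eigenvalues i : ℝ) : ℂ) := by
      rw [hH.det_eq_prod_eigenvalues]; norm_cast
    rw [h1]; exact Complex.ofReal_re _
  rw [hdet, Real.log_prod (fun i _ => (hA.eigenvalues_pos i).ne')]
  push_cast
  rfl

lemma pyramid_posDef {X : ℕ → Matrix (Fin d) (Fin d) ℂ} (hX : ∀ ℓ, (X ℓ).PosDef) :
    ∀ m k, (pyramid X m k).PosDef
  | 0, k => hX k
  | m + 1, k => mid_posDef (pyramid_posDef hX m (2 * k)) (pyramid_posDef hX m (2 * k + 1))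

lemma ldet_mid {p q : Matrix (Fin d) (Fin d) ℂ} (hp : p.PosDef) (hq : q.PosDef) :
    2 * Real.log ((mid p q).det.re) = Real.log (p.det.re) + Real.log (q.det.re) := by
  have hm := mid_posDef hp hq
  have h2 : ((mid p q).det.re : ℂ) ^ 2 = ((p.det.re : ℝ) : ℂ) * ((q.det.re : ℝ) : ℂ) := by
    rw [← posDef_det_eq_ofReal hm, ← posDef_det_eq_ofReal hp, ← posDef_det_eq_ofReal hq]
    exact det_mid_sq hp hq
  have h2' : (mid p q).det.re ^ 2 = p.det.re * q.det.re := by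
    exact_mod_cast h2
  have := congrArg Real.log h2'
  rw [Real.log_pow, Real.log_mul (posDef_det_re_pos hp).ne' (posDef_det_re_pos hq).ne'] at this
  exact_mod_cast this

end Aux

/-- additive decomposition of traces under congruence. If
`X_ℓ = f_ℓ^{1/2} W_ℓ f_ℓ^{1/2}` then the traces of the logs of the midpoint pyramids satisfy
`Tr(Log M^X_{j,k}) = Tr(Log M^f_{j,k}) + Tr(Log M^W_{j,k})` at every scale-location. -/
theorem trace_log_pyramid_additive {d : ℕ}
    (f W X : ℕ → Matrix (Fin d) (Fin d) ℂ)
    (hf : ∀ ℓ, (f ℓ).PosDef) (hW : ∀ ℓ, (W ℓ).PosDef)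
    (hX : ∀ ℓ, X ℓ = msqrt (f ℓ) * W ℓ * msqrt (f ℓ)) (m k : ℕ) :
    (mLog (pyramid X m k)).trace =
      (mLog (pyramid f m k)).trace + (mLog (pyramid W m k)).trace := by
  have hXpd : ∀ ℓ, (X ℓ).PosDef := fun ℓ => by
    rw [hX ℓ]
    exact posDef_conj_of_isHermitian (hW ℓ) (msqrt_posDef (hf ℓ)).1 (msqrt_posDef (hf ℓ)).isUnit
  have hbase : ∀ ℓ, Real.log ((X ℓ).det.re)
      = Real.log ((f ℓ).det.re) + Real.log ((W ℓ).det.re) := by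
    intro ℓ
    have hdet : (X ℓ).det = (f ℓ).det * (W ℓ).det := by
      have hs := congrArg Matrix.det (msqrt_mul_self (hf ℓ))
      rw [Matrix.det_mul] at hs
      rw [hX ℓ, Matrix.det_mul, Matrix.det_mul, ← hs]
      ring
    have hre : (X ℓ).det.re = (f ℓ).det.re * (W ℓ).det.re := by
      have : (X ℓ).det = (((f ℓ).det.re * (W ℓ).det.re : ℝ) : ℂ) := by
        rw [hdet, posDef_det_eq_ofReal (hf ℓ), posDef_det_eq_ofReal (hW ℓ)]
        simp
      rw [this]; exact Complex.ofReal_re _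
    rw [hre, Real.log_mul (posDef_det_re_pos (hf ℓ)).ne' (posDef_det_re_pos (hW ℓ)).ne']
  have hld : ∀ m k, Real.log ((pyramid X m k).det.re)
      = Real.log ((pyramid f m k).det.re) + Real.log ((pyramid W m k).det.re) := by
    intro m
    induction m with
    | zero => intro k; exact hbase k
    | succ m ih =>
      intro k
      have eX : pyramid X (m + 1) k
          = mid (pyramid X m (2 * k)) (pyramid X m (2 * k + 1)) := rfl
      have ef : pyramid f (m + 1) k
          = mid (pyramid f m (2 * k)) (pyramid f m (2 * k + 1)) := rfl
      have eW : pyramid W (m + 1) k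
          = mid (pyramid W m (2 * k)) (pyramid W m (2 * k + 1)) := rfl
      have h1 := ldet_mid (pyramid_posDef hXpd m (2 * k)) (pyramid_posDef hXpd m (2 * k + 1))
      have h2 := ldet_mid (pyramid_posDef hf m (2 * k)) (pyramid_posDef hf m (2 * k + 1))
      have h3 := ldet_mid (pyramid_posDef hW m (2 * k)) (pyramid_posDef hW m (2 * k + 1))
      have i1 := ih (2 * k)
      have i2 := ih (2 * k + 1)
      rw [eX, ef, eW]
      linarith
  rw [trace_mLog_posDef (pyramid_posDef hXpd m k),
    trace_mLog_posDef (pyramid_posDef hf m k),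
    trace_mLog_posDef (pyramid_posDef hW m k)]
  exact_mod_cast hld m k
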